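/- Let k ≥ 3 and let r₁,…,r_k be positive real numbers. Suppose p₁ = (x₁,y₁), …, p_k = (x_k,y_k) are points of ℝ² satisfying: (i) x_i² + y_i² = r_i² + 2r_i for each 1 ≤ i ≤ k, and y₁ = 0; (ii) x_i y_{i+1} − y_i x_{i+1} < 0 for each 1 ≤ i ≤ k−1, and x_k y₁ − y_k x₁ < 0 (that is, each consecutive pair of position vectors is linearly independent with p_{i+1} clockwise of p_i, and p₁ is clockwise of p_k); (iii) ‖p_i − p_{i+1}‖ = r_i + r_{i+1} for each 1 ≤ i ≤ k−1. If in addition ‖p₁ − p_k‖ = r₁ + r_k, then the family (r₁,…,r_k) is not algebraically independent over ℚ (i.e., either two of the rᵢ coincide or some nonzero polynomial with rational coefficients vanishes at (r₁,…,r_k)). -/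

import Mathlib

noncomputable section

open IntermediateField Polynomial


open IntermediateField Polynomial


private def vaS (S : Set ℝ) : MvPolynomial S ℚ →ₐ[ℚ] ℝ := MvPolynomial.aeval Subtype.val

private lemma aeval_mem_ringAdjoin (S : Set ℝ) (p : MvPolynomial S ℚ) :
    MvPolynomial.aeval (Subtype.val : S → ℝ) p ∈ Algebra.adjoin ℚ S := by
  have h : Algebra.adjoin ℚ S = (MvPolynomial.aeval (Subtype.val : S → ℝ)).range := by
    rw [← Algebra.adjoin_range_eq_range_aeval, Subtype.range_coe]
  rw [h]; exact ⟨p, rfl⟩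

/-- If `z` is algebraic over the intermediate field generated by `S`, it is algebraic over the
ring adjoin of `S`. -/
private lemma isAlg_ringAdjoin_of_isAlg_fieldAdjoin (S : Set ℝ) (z : ℝ)
    (h : IsAlgebraic ↥(IntermediateField.adjoin ℚ S) z) :
    IsAlgebraic ↥(Algebra.adjoin ℚ S) z := by
  classical
  obtain ⟨q, hq0, hqz⟩ := h
  have H : ∀ i : ℕ, ∃ rs : MvPolynomial S ℚ × MvPolynomial S ℚ,
      ((q.coeff i : ℝ)) = vaS S rs.1 / vaS S rs.2 ∧ (((q.coeff i : ℝ)) ≠ 0 → vaS S rs.2 ≠ 0) := by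
    intro i
    by_cases h0 : ((q.coeff i : ℝ)) = 0
    · exact ⟨(0, 1), by simp [h0, vaS], fun hh => absurd h0 hh⟩
    · obtain ⟨rr, ss, hx⟩ := (IntermediateField.mem_adjoin_iff ℚ ((q.coeff i : ℝ))).mp
        (q.coeff i).2
      exact ⟨(rr, ss), hx, fun _ hs => absurd
        (by rw [hx, show MvPolynomial.aeval (Subtype.val : S → ℝ) ss = 0 from hs, div_zero]) h0⟩
  choose rs hrep hden using H
  set d : ℝ := ∏ i ∈ q.support, vaS S (rs i).2 with hd
  have hsupp_ne : ∀ i ∈ q.support, ((q.coeff i : ℝ)) ≠ 0 := by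
    intro i hi
    have := Polynomial.mem_support_iff.mp hi
    simpa using this
  have hd0 : d ≠ 0 := by
    rw [hd]
    exact Finset.prod_ne_zero_iff.mpr fun i hi => hden i (hsupp_ne i hi)
  have key : ∀ i ∈ q.support,
      vaS S ((rs i).1 * ∏ j ∈ q.support.erase i, (rs j).2) = d * ((q.coeff i : ℝ)) := by
    intro i hi
    have hdi : vaS S (rs i).2 ≠ 0 := hden i (hsupp_ne i hi)
    have hprod : d = vaS S (rs i).2 * ∏ j ∈ q.support.erase i, vaS S (rs j).2 := by
      rw [hd, ← Finset.mul_prod_erase _ _ hi]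
    rw [map_mul, map_prod, hprod, hrep i]
    field_simp
  set Q : Polynomial ↥(Algebra.adjoin ℚ S) := ∑ i ∈ q.support,
    Polynomial.monomial i (⟨vaS S ((rs i).1 * ∏ j ∈ q.support.erase i, (rs j).2),
      aeval_mem_ringAdjoin S _⟩ : ↥(Algebra.adjoin ℚ S)) with hQ
  have hqsupp : q.support.Nonempty := Polynomial.nonempty_support_iff.mpr hq0
  obtain ⟨i₀, hi₀⟩ := hqsupp
  have hQcoeff : ∀ n ∈ q.support, ((Q.coeff n : ℝ)) = d * ((q.coeff n : ℝ)) := by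
    intro n hn
    rw [hQ, Polynomial.finset_sum_coeff]
    simp only [Polynomial.coeff_monomial]
    rw [Finset.sum_ite_eq' q.support n, if_pos hn]
    exact key n hn
  refine ⟨Q, ?_, ?_⟩
  · intro hQ0
    have := hQcoeff i₀ hi₀
    rw [hQ0] at this
    simp only [Polynomial.coeff_zero, ZeroMemClass.coe_zero] at this
    exact (mul_ne_zero hd0 (hsupp_ne i₀ hi₀)) this.symm
  · have hq_eval : Polynomial.aeval z q = ∑ i ∈ q.support, ((q.coeff i : ℝ)) * z ^ i := by
      rw [Polynomial.aeval_def, Polynomial.eval₂_eq_sum, Polynomial.sum_def]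
      rfl
    have : Polynomial.aeval z Q = ∑ i ∈ q.support, ((Q.coeff i : ℝ)) * z ^ i := by
      rw [hQ, map_sum]
      refine Finset.sum_congr rfl fun i hi => ?_
      rw [Polynomial.aeval_monomial]
      congr 1
      rw [Polynomial.finset_sum_coeff]
      simp only [Polynomial.coeff_monomial]
      rw [Finset.sum_ite_eq' q.support i, if_pos hi]
      rfl
    rw [this]
    have : ∑ i ∈ q.support, ((Q.coeff i : ℝ)) * z ^ i
        = d * ∑ i ∈ q.support, ((q.coeff i : ℝ)) * z ^ i := by
      rw [Finset.mul_sum]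
      exact Finset.sum_congr rfl fun i hi => by rw [hQcoeff i hi, mul_assoc]
    rw [this, ← hq_eval, hqz, mul_zero]

/-- Exchange: if `b` is transcendental over `F` but algebraic over `F(a)`,
then `a` is algebraic over `F(b)`. -/
private lemma exchange_lemma {F E : Type*} [Field F] [Field E] [Algebra F E] {a b : E}
    (htr : Transcendental F b) (halg : IsAlgebraic ↥F⟮a⟯ b) :
    IsAlgebraic ↥F⟮b⟯ a := by
  classical
  obtain ⟨q, hq0, hqb⟩ := halg
  have H : ∀ i : ℕ, ∃ rs : F[X] × F[X],
      ((q.coeff i : E)) = Polynomial.aeval a rs.1 / Polynomial.aeval a rs.2 ∧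
      (((q.coeff i : E)) ≠ 0 → Polynomial.aeval a rs.2 ≠ 0) := by
    intro i
    by_cases h0 : ((q.coeff i : E)) = 0
    · exact ⟨(0, 1), by simp [h0], fun hh => absurd h0 hh⟩
    · obtain ⟨rr, ss, hx⟩ := (IntermediateField.mem_adjoin_simple_iff F _).mp (q.coeff i).2
      exact ⟨(rr, ss), hx, fun _ hs => absurd (by rw [hx, hs, div_zero]) h0⟩
  choose rs hrep hden using H
  set d : E := ∏ i ∈ q.support, Polynomial.aeval a (rs i).2 with hd
  have hsupp_ne : ∀ i ∈ q.support, ((q.coeff i : E)) ≠ 0 := by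
    intro i hi
    have := Polynomial.mem_support_iff.mp hi
    simpa using this
  have hd0 : d ≠ 0 := by
    rw [hd]
    exact Finset.prod_ne_zero_iff.mpr fun i hi => hden i (hsupp_ne i hi)
  set R : ℕ → F[X] := fun i => (rs i).1 * ∏ j ∈ q.support.erase i, (rs j).2 with hR
  have key : ∀ i ∈ q.support, Polynomial.aeval a (R i) = d * ((q.coeff i : E)) := by
    intro i hi
    have hdi : Polynomial.aeval a (rs i).2 ≠ 0 := hden i (hsupp_ne i hi)
    have hprod : d = Polynomial.aeval a (rs i).2
        * ∏ j ∈ q.support.erase i, Polynomial.aeval a (rs j).2 := by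
      rw [hd, ← Finset.mul_prod_erase _ _ hi]
    rw [hR]
    simp only [map_mul, map_prod]
    rw [hprod, hrep i]
    field_simp
  set gb : ↥F⟮b⟯ := IntermediateField.AdjoinSimple.gen F b with hgb
  set P : Polynomial ↥F⟮b⟯ := ∑ i ∈ q.support,
    (R i).map (algebraMap F ↥F⟮b⟯) * (Polynomial.C gb) ^ i with hP
  have hqsupp : q.support.Nonempty := Polynomial.nonempty_support_iff.mpr hq0
  obtain ⟨i₀, hi₀⟩ := hqsupp
  refine ⟨P, ?_, ?_⟩
  · intro hP0
    have hallR : ∀ i ∈ q.support, R i = 0 := by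
      intro i hi
      ext n
      -- coefficient n of P is zero
      have hcoeff : ∑ j ∈ q.support, algebraMap F ↥F⟮b⟯ ((R j).coeff n) * gb ^ j = 0 := by
        have := congrArg (fun p => Polynomial.coeff p n) hP0
        simp only [hP, Polynomial.finset_sum_coeff, Polynomial.coeff_zero] at this
        rw [← this]
        refine Finset.sum_congr rfl fun j hj => ?_
        rw [← Polynomial.C_pow, Polynomial.coeff_mul_C, Polynomial.coeff_map]
      -- push to E
      have hcoeffE : ∑ j ∈ q.support, algebraMap F E ((R j).coeff n) * b ^ j = 0 := by
        have := congrArg (fun z : ↥F⟮b⟯ => (z : E)) hcoeff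
        push_cast at this
        simpa [hgb] using this
      -- transcendence of b
      set W : F[X] := ∑ j ∈ q.support, Polynomial.monomial j ((R j).coeff n) with hW
      have hWb : Polynomial.aeval b W = 0 := by
        rw [hW, map_sum]
        simpa only [Polynomial.aeval_monomial] using hcoeffE
      have hW0 : W = 0 := by
        by_contra hne
        exact htr ⟨W, hne, hWb⟩
      have := congrArg (fun p => Polynomial.coeff p i) hW0
      simp only [hW, Polynomial.finset_sum_coeff, Polynomial.coeff_monomial,
        Polynomial.coeff_zero] at this
      rwa [Finset.sum_ite_eq' q.support i, if_pos hi] at this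
    have := key i₀ hi₀
    rw [hallR i₀ hi₀] at this
    simp only [map_zero] at this
    exact (mul_ne_zero hd0 (hsupp_ne i₀ hi₀)) this.symm
  · have hq_eval : Polynomial.aeval b q = ∑ i ∈ q.support, ((q.coeff i : E)) * b ^ i := by
      rw [Polynomial.aeval_def, Polynomial.eval₂_eq_sum, Polynomial.sum_def]
      rfl
    rw [hP, map_sum]
    have : ∀ i ∈ q.support,
        Polynomial.aeval a ((R i).map (algebraMap F ↥F⟮b⟯) * (Polynomial.C gb) ^ i)
          = d * (((q.coeff i : E)) * b ^ i) := by
      intro i hi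
      rw [map_mul, Polynomial.aeval_map_algebraMap, map_pow, Polynomial.aeval_C]
      have hgbE : (algebraMap ↥F⟮b⟯ E) gb = b := rfl
      rw [hgbE, key i hi]
      ring
    rw [Finset.sum_congr rfl this, ← Finset.mul_sum, ← hq_eval, hqb, mul_zero]



private lemma isAlg_mono {K L : IntermediateField ℚ ℝ} (h : K ≤ L) {x : ℝ}
    (hx : IsAlgebraic ↥K x) : IsAlgebraic ↥L x :=
  IsAlgebraic.tower_top_of_subalgebra_le (A := K.toSubalgebra) (B := L.toSubalgebra) h hx

private lemma count_lemma : ∀ (m p : ℕ) (u : Fin p → ℝ) (t : Fin m → ℝ) (v : Fin (m+1) → ℝ),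
    AlgebraicIndependent ℚ (Sum.elim u v) →
    (∀ i, IsAlgebraic ↥(IntermediateField.adjoin ℚ (Set.range u ∪ Set.range t)) (v i)) →
    False := by
  intro m
  induction m with
  | zero =>
    intro p u t v hj halg
    have hu : AlgebraicIndependent ℚ u := hj.comp Sum.inl Sum.inl_injective
    have hinj : Function.Injective
        (fun o : Option (Fin p) => o.elim (Sum.inr 0) Sum.inl :
          Option (Fin p) → Fin p ⊕ Fin (0 + 1)) := by
      intro o1 o2 h
      cases o1 with
      | none =>
        cases o2 with
        | none => rfl
        | some i => exact absurd h (by simp)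
      | some i1 =>
        cases o2 with
        | none => exact absurd h (by simp)
        | some i2 =>
          simp only [Option.elim_some] at h
          rw [Sum.inl_injective h]
    have hopt : AlgebraicIndependent ℚ (fun o : Option (Fin p) => o.elim (v 0) u) := by
      have h2 := hj.comp
        (fun o : Option (Fin p) => o.elim (Sum.inr 0) Sum.inl :
          Option (Fin p) → Fin p ⊕ Fin (0 + 1)) hinj
      have hfun : (Sum.elim u v) ∘
          (fun o : Option (Fin p) => o.elim (Sum.inr 0) Sum.inl :
            Option (Fin p) → Fin p ⊕ Fin (0 + 1))
          = fun o : Option (Fin p) => o.elim (v 0) u := by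
        funext o; cases o <;> rfl
      rwa [hfun] at h2
    have htr := (hu.option_iff_transcendental (v 0)).mp hopt
    have h0 : IsAlgebraic ↥(IntermediateField.adjoin ℚ (Set.range u)) (v 0) := by
      have := halg 0
      rwa [Set.range_eq_empty t, Set.union_empty] at this
    exact htr (isAlg_ringAdjoin_of_isAlg_fieldAdjoin _ _ h0)
  | succ m ih =>
    intro p u t v hj halg
    set a := t (Fin.last m) with ha
    set t' : Fin m → ℝ := t ∘ Fin.castSucc with ht'
    have hrt : Set.range t = Set.range t' ∪ {a} := by
      ext z
      constructor
      · rintro ⟨i, rfl⟩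
        induction i using Fin.lastCases with
        | last => exact Or.inr rfl
        | cast i => exact Or.inl ⟨i, rfl⟩
      · rintro (⟨i, rfl⟩ | rfl)
        exacts [⟨i.castSucc, rfl⟩, ⟨Fin.last m, rfl⟩]
    by_cases hc : ∀ i, IsAlgebraic ↥(IntermediateField.adjoin ℚ (Set.range u ∪ Set.range t')) (v i)
    · have hinj : Function.Injective
          (Sum.map (id : Fin p → Fin p) (Fin.castSucc : Fin (m+1) → Fin (m+2))) :=
        Function.Injective.sumMap Function.injective_id (Fin.castSucc_injective _)
      have h2 := hj.comp _ hinj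
      have hfun : (Sum.elim u v) ∘ Sum.map id Fin.castSucc = Sum.elim u (v ∘ Fin.castSucc) := by
        funext o; cases o <;> rfl
      rw [hfun] at h2
      exact ih p u t' (v ∘ Fin.castSucc) h2 (fun i => hc _)
    · push_neg at hc
      obtain ⟨j, hjalg⟩ := hc
      set F := IntermediateField.adjoin ℚ (Set.range u ∪ Set.range t') with hF
      have htr : Transcendental ↥F (v j) := hjalg
      have h2 : (IntermediateField.adjoin (↥F) {a}).restrictScalars ℚ
          = IntermediateField.adjoin ℚ (Set.range u ∪ Set.range t) := by
        rw [hF]; erw [IntermediateField.adjoin_adjoin_left]; rw [hrt, Set.union_assoc]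
      have h3 : IsAlgebraic ↥(IntermediateField.adjoin (↥F) {a}) (v j) := by
        have h1 := halg j
        rw [← h2] at h1
        exact h1
      have hex : IsAlgebraic ↥(IntermediateField.adjoin (↥F) {v j}) a :=
        exchange_lemma (F := ↥F) (E := ℝ) htr h3
      set G := IntermediateField.adjoin ℚ (Set.range u ∪ Set.range t' ∪ {v j}) with hG
      have h4 : (IntermediateField.adjoin (↥F) {v j}).restrictScalars ℚ = G := by
        rw [hF]; erw [IntermediateField.adjoin_adjoin_left]
      have hexG : IsAlgebraic ↥G a := by
        rw [← h4]
        exact hex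
      have h5 : (IntermediateField.adjoin (↥G) {a}).restrictScalars ℚ
          = IntermediateField.adjoin ℚ (Set.range u ∪ Set.range t' ∪ {v j} ∪ {a}) := by
        rw [hG]; erw [IntermediateField.adjoin_adjoin_left]
      have hle : IntermediateField.adjoin ℚ (Set.range u ∪ Set.range t)
          ≤ (IntermediateField.adjoin (↥G) {a}).restrictScalars ℚ := by
        rw [h5]
        apply IntermediateField.adjoin.mono
        rw [hrt]
        intro z hz
        rcases hz with hz | hz
        · exact Or.inl (Or.inl (Or.inl hz))
        · rcases hz with hz | hz
          · exact Or.inl (Or.inl (Or.inr hz))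
          · exact Or.inr hz
      have hvG : ∀ i, IsAlgebraic ↥G (v i) := by
        intro i
        have h6 : IsAlgebraic ↥((IntermediateField.adjoin (↥G) {a}).restrictScalars ℚ) (v i) :=
          isAlg_mono hle (halg i)
        have h7 : IsAlgebraic ↥(IntermediateField.adjoin (↥G) {a}) (v i) := h6
        haveI : Algebra.IsIntegral ↥G ↥(IntermediateField.adjoin (↥G) {a}) := by
          have := IntermediateField.isAlgebraic_adjoin_simple (K := ↥G) (L := ℝ)
            hexG.isIntegral
          rwa [Algebra.isAlgebraic_iff_isIntegral] at this
        exact (isIntegral_trans (v i) (isAlgebraic_iff_isIntegral.mp h7)).isAlgebraic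
      -- apply the inductive hypothesis with u extended by (v j) and v with j removed
      set u' : Fin (p+1) → ℝ := Fin.snoc u (v j) with hu'
      set v' : Fin (m+1) → ℝ := fun i => v (j.succAbove i) with hv'
      set e : Fin (p + 1) ⊕ Fin (m + 1) → Fin p ⊕ Fin (m + 2) :=
        Sum.elim (Fin.lastCases (Sum.inr j) (fun i0 => Sum.inl i0))
          (fun i => Sum.inr (j.succAbove i)) with he
      have he1 : ∀ i0 : Fin p, e (Sum.inl i0.castSucc) = Sum.inl i0 := by
        intro i0; simp [he]
      have he2 : e (Sum.inl (Fin.last p)) = Sum.inr j := by simp [he]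
      have he3 : ∀ i0 : Fin (m + 1), e (Sum.inr i0) = Sum.inr (j.succAbove i0) :=
        fun _ => rfl
      have heinj : Function.Injective e := by
        rintro (i1 | i1) (i2 | i2)
        · induction i1 using Fin.lastCases with
          | last =>
            induction i2 using Fin.lastCases with
            | last => intro _; rfl
            | cast i2 =>
              rw [he2, he1 i2]; intro h; exact absurd h.symm (by simp)
          | cast i1 =>
            induction i2 using Fin.lastCases with
            | last =>
              rw [he2, he1 i1]; intro h; exact absurd h (by simp)
            | cast i2 =>
              rw [he1 i1, he1 i2]; intro h
              rw [Sum.inl_injective h]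
        · induction i1 using Fin.lastCases with
          | last =>
            rw [he2, he3 i2]; intro h
            exact absurd (Sum.inr_injective h).symm (Fin.succAbove_ne j i2)
          | cast i1 =>
            rw [he1 i1, he3 i2]; intro h; exact absurd h (by simp)
        · induction i2 using Fin.lastCases with
          | last =>
            rw [he2, he3 i1]; intro h
            exact absurd (Sum.inr_injective h) (Fin.succAbove_ne j i1)
          | cast i2 =>
            rw [he1 i2, he3 i1]; intro h; exact absurd h (by simp)
        · rw [he3 i1, he3 i2]; intro h
          rw [Fin.succAbove_right_injective (Sum.inr_injective h)]
      have hfun : (Sum.elim u v) ∘ e = Sum.elim u' v' := by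
        funext o
        rcases o with i | i
        · induction i using Fin.lastCases with
          | last =>
            show (Sum.elim u v) (e (Sum.inl (Fin.last p))) = u' (Fin.last p)
            rw [he2, hu']
            simp [Fin.snoc_last]
          | cast i0 =>
            show (Sum.elim u v) (e (Sum.inl i0.castSucc)) = u' i0.castSucc
            rw [he1 i0, hu']
            simp [Fin.snoc_castSucc]
        · rfl
      have hj' : AlgebraicIndependent ℚ (Sum.elim u' v') := by
        have := hj.comp e heinj
        rwa [hfun] at this
      have hru : Set.range u' = Set.range u ∪ {v j} := by
        ext z
        constructor
        · rintro ⟨i, rfl⟩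
          induction i using Fin.lastCases with
          | last => exact Or.inr (by simp [hu'])
          | cast i => exact Or.inl ⟨i, by simp [hu']⟩
        · rintro (⟨i, rfl⟩ | rfl)
          · exact ⟨i.castSucc, by simp [hu']⟩
          · exact ⟨Fin.last p, by simp [hu']⟩
      have halg' : ∀ i, IsAlgebraic
          ↥(IntermediateField.adjoin ℚ (Set.range u' ∪ Set.range t')) (v' i) := by
        intro i
        have hset : Set.range u' ∪ Set.range t' = Set.range u ∪ Set.range t' ∪ {v j} := by
          rw [hru, Set.union_right_comm]
        rw [hset]
        exact hvG _
      exact ih (p+1) u' t' v' hj' halg'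

set_option maxHeartbeats 1000000 in
set_option synthInstance.maxHeartbeats 400000 in
/-- The special framework lemma: if points `p_i = (x_i, y_i)` for `1 ≤ i ≤ k` are built
from positive scalars `r_1, …, r_k` so that `‖p_i‖² = r_i² + 2 r_i`, `y_1 = 0`,
consecutive position vectors are linearly independent with `p_{i+1}` clockwise of `p_i`
(and `p_1` clockwise of `p_k`), and `‖p_i − p_{i+1}‖ = r_i + r_{i+1}`, then closing the
cycle `‖p_1 − p_k‖ = r_1 + r_k` forces `(r_1, …, r_k)` to be algebraically dependent
over `ℚ`. -/
theorem special_framework_dependent (k : ℕ) (hk : 3 ≤ k) (r x y : ℕ → ℝ)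
    (hr : ∀ i, 1 ≤ i → i ≤ k → 0 < r i)
    (hnorm : ∀ i, 1 ≤ i → i ≤ k → x i ^ 2 + y i ^ 2 = r i ^ 2 + 2 * r i)
    (hy1 : y 1 = 0)
    (hclock : ∀ i, 1 ≤ i → i ≤ k - 1 → x i * y (i + 1) - y i * x (i + 1) < 0)
    (hclockk : x k * y 1 - y k * x 1 < 0)
    (htouch : ∀ i, 1 ≤ i → i ≤ k - 1 →
      Real.sqrt ((x i - x (i + 1)) ^ 2 + (y i - y (i + 1)) ^ 2) = r i + r (i + 1))
    (hclose : Real.sqrt ((x 1 - x k) ^ 2 + (y 1 - y k) ^ 2) = r 1 + r k) :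
    ¬ AlgebraicIndependent ℚ (fun i : Fin k => r (i.1 + 1)) := by
  intro hind
  obtain ⟨m, rfl⟩ : ∃ m, k = m + 3 := ⟨k - 3, by omega⟩
  set a : ℕ → ℝ := fun i => x i / (2 * r i) with haf
  set b : ℕ → ℝ := fun i => y i / (2 * r i) with hbf
  set c : ℕ → ℝ := fun i => a (i + 1) - a i with hcf
  set s : ℕ → ℝ := fun i => b (i + 1) - b i with hsf
  have hrne : ∀ i, 1 ≤ i → i ≤ m + 3 → r i ≠ 0 := fun i h1 h2 => (hr i h1 h2).ne'
  have htouch2 : ∀ i, 1 ≤ i → i ≤ m + 2 →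
      (x i - x (i + 1)) ^ 2 + (y i - y (i + 1)) ^ 2 = (r i + r (i + 1)) ^ 2 := by
    intro i h1 h2
    have h3 := htouch i h1 (by omega)
    have h4 : Real.sqrt ((x i - x (i + 1)) ^ 2 + (y i - y (i + 1)) ^ 2) ^ 2
        = (r i + r (i + 1)) ^ 2 := by rw [h3]
    rwa [Real.sq_sqrt (by positivity)] at h4
  have hclose2 : (x 1 - x (m + 3)) ^ 2 + (y 1 - y (m + 3)) ^ 2 = (r 1 + r (m + 3)) ^ 2 := by
    have h4 : Real.sqrt ((x 1 - x (m + 3)) ^ 2 + (y 1 - y (m + 3)) ^ 2) ^ 2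
        = (r 1 + r (m + 3)) ^ 2 := by rw [hclose]
    rwa [Real.sq_sqrt (by positivity)] at h4
  have hunit : ∀ i j, 1 ≤ i → i ≤ m + 3 → 1 ≤ j → j ≤ m + 3 →
      (x i - x j) ^ 2 + (y i - y j) ^ 2 = (r i + r j) ^ 2 →
      (a j - a i) ^ 2 + (b j - b i) ^ 2 = 1 := by
    intro i j h1 h2 h3 h4 hd
    have hi := hnorm i h1 h2
    have hj := hnorm j h3 h4
    have hri := hrne i h1 h2
    have hrj := hrne j h3 h4
    have key : (x j * r i - x i * r j) ^ 2 + (y j * r i - y i * r j) ^ 2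
        = 4 * r i ^ 2 * r j ^ 2 := by
      linear_combination (r i ^ 2 - r i * r j) * hj + (r j ^ 2 - r i * r j) * hi
        + (r i * r j) * hd
    have ha' : a j - a i = (x j * r i - x i * r j) / (2 * r i * r j) := by
      simp only [haf]
      field_simp
    have hb' : b j - b i = (y j * r i - y i * r j) / (2 * r i * r j) := by
      simp only [hbf]
      field_simp
    rw [ha', hb', div_pow, div_pow, ← add_div, key]
    rw [div_eq_one_iff_eq (by positivity)]
    ring
  have hedge : ∀ i, 1 ≤ i → i ≤ m + 2 → c i ^ 2 + s i ^ 2 = 1 := by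
    intro i h1 h2
    simpa only [hcf, hsf] using
      hunit i (i + 1) h1 (by omega) (by omega) (by omega) (htouch2 i h1 h2)
  have hcloseunit : (a (m + 3) - a 1) ^ 2 + (b (m + 3) - b 1) ^ 2 = 1 :=
    hunit 1 (m + 3) (by omega) (by omega) (by omega) (by omega) hclose2
  have hb1 : b 1 = 0 := by simp only [hbf]; rw [hy1, zero_div]
  have htel_a : ∀ i, 1 ≤ i → a i = a 1 + ∑ j ∈ Finset.Ico 1 i, c j := by
    intro i h1
    induction i, h1 using Nat.le_induction with
    | base => simp
    | succ n hn ihn =>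
      rw [Finset.sum_Ico_succ_top hn, ← add_assoc, ← ihn]
      simp only [hcf]
      ring
  have htel_b : ∀ i, 1 ≤ i → b i = b 1 + ∑ j ∈ Finset.Ico 1 i, s j := by
    intro i h1
    induction i, h1 using Nat.le_induction with
    | base => simp
    | succ n hn ihn =>
      rw [Finset.sum_Ico_succ_top hn, ← add_assoc, ← ihn]
      simp only [hsf]
      ring
  set C2 : ℝ := ∑ j ∈ Finset.Ico 1 (m + 2), c j with hC2
  set S2 : ℝ := ∑ j ∈ Finset.Ico 1 (m + 2), s j with hS2
  have haC3 : a (m + 3) = a 1 + (C2 + c (m + 2)) := by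
    rw [htel_a (m + 3) (by omega), Finset.sum_Ico_succ_top (by omega : 1 ≤ m + 2)]
  have hbS3 : b (m + 3) = S2 + s (m + 2) := by
    rw [htel_b (m + 3) (by omega), Finset.sum_Ico_succ_top (by omega : 1 ≤ m + 2), hb1]
    ring
  have hstar : 2 * C2 * c (m + 2) + 2 * S2 * s (m + 2) + C2 ^ 2 + S2 ^ 2 = 0 := by
    have h1 := hcloseunit
    rw [haC3, hbS3, hb1] at h1
    have h2 := hedge (m + 2) (by omega) (by omega)
    linear_combination h1 - h2
  by_cases hdeg : C2 = 0 ∧ S2 = 0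
  · obtain ⟨hC0, hS0⟩ := hdeg
    have haM2 : a (m + 2) = a 1 := by
      rw [htel_a (m + 2) (by omega), ← hC2, hC0, add_zero]
    have hbM2 : b (m + 2) = 0 := by
      rw [htel_b (m + 2) (by omega), ← hS2, hS0, hb1, add_zero]
    have hy2 : y (m + 2) = 0 := by
      have h5 : y (m + 2) / (2 * r (m + 2)) = 0 := hbM2
      rcases div_eq_zero_iff.mp h5 with h | h
      · exact h
      · exact absurd h (by have := hrne (m + 2) (by omega) (by omega); positivity)
    have hx2 : x (m + 2) * r 1 = x 1 * r (m + 2) := by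
      have h5 : x (m + 2) / (2 * r (m + 2)) = x 1 / (2 * r 1) := haM2
      rw [div_eq_div_iff (by have := hr (m+2) (by omega) (by omega); positivity)
        (by have := hr 1 (by omega) (by omega); positivity)] at h5
      linarith
    have hcl := hclock (m + 2) (by omega) (by omega)
    rw [hy2, zero_mul, sub_zero] at hcl
    have hck := hclockk
    rw [hy1, mul_zero, zero_sub] at hck
    have h7 : 0 < y (m + 3) * x 1 := by linarith
    have h8 : x (m + 2) * y (m + 3) * r 1 = x 1 * r (m + 2) * y (m + 3) := by
      rw [← hx2]; ring
    have h9 : x (m + 2) * y (m + 3) * r 1 < 0 :=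
      mul_neg_of_neg_of_pos hcl (hr 1 (by omega) (by omega))
    have h10 : 0 < y (m + 3) * x 1 * r (m + 2) :=
      mul_pos h7 (hr (m + 2) (by omega) (by omega))
    nlinarith [h8, h9, h10]
  · -- non-degenerate case
    set T : Fin (m + 2) → ℝ := fun j => if j.1 = 0 then a 1 else c j.1 with hT
    set M : IntermediateField ℚ ℝ := IntermediateField.adjoin ℚ (Set.range T) with hM
    have hmem_alg : ∀ z : ℝ, z ∈ integralClosure ↥M ℝ → IsAlgebraic ↥M z :=
      fun z hz => IsIntegral.isAlgebraic hz
    have halg_mem : ∀ z : ℝ, IsAlgebraic ↥M z → z ∈ integralClosure ↥M ℝ :=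
      fun z hz => isAlgebraic_iff_isIntegral.mp hz
    have hMsub : ∀ z : ℝ, z ∈ M → z ∈ integralClosure ↥M ℝ := by
      intro z hz
      exact halg_mem z (isAlgebraic_algebraMap (⟨z, hz⟩ : ↥M))
    have hinv : ∀ z : ℝ, z ∈ integralClosure ↥M ℝ → z⁻¹ ∈ integralClosure ↥M ℝ := by
      intro z hz
      exact Subalgebra.inv_mem_of_algebraic (integralClosure ↥M ℝ)
        (x := ⟨z, hz⟩) (hmem_alg z hz)
    have hsq : ∀ z : ℝ, z ^ 2 ∈ integralClosure ↥M ℝ → z ∈ integralClosure ↥M ℝ := by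
      intro z hz
      exact halg_mem z (IsAlgebraic.of_pow (by norm_num) (hmem_alg _ hz))
    have hquad : ∀ z p q : ℝ, p ∈ integralClosure ↥M ℝ → q ∈ integralClosure ↥M ℝ →
        z ^ 2 + p * z + q = 0 → z ∈ integralClosure ↥M ℝ := by
      intro z p q hp hq hrel
      have h2 : IsIntegral ↥(integralClosure ↥M ℝ) z := by
        refine ⟨Polynomial.X ^ 2 + (Polynomial.C (⟨p, hp⟩ : ↥(integralClosure ↥M ℝ))
          * Polynomial.X + Polynomial.C (⟨q, hq⟩ : ↥(integralClosure ↥M ℝ))), ?_, ?_⟩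
        · apply Polynomial.monic_X_pow_add
          exact lt_of_le_of_lt (Polynomial.degree_linear_le) (by norm_num)
        · have hev : Polynomial.eval₂ (algebraMap ↥(integralClosure ↥M ℝ) ℝ) z
              (Polynomial.X ^ 2 + (Polynomial.C (⟨p, hp⟩ : ↥(integralClosure ↥M ℝ))
              * Polynomial.X + Polynomial.C (⟨q, hq⟩ : ↥(integralClosure ↥M ℝ))))
              = z ^ 2 + p * z + q := by
            have hmap : ∀ w : ↥(integralClosure ↥M ℝ),
                algebraMap ↥(integralClosure ↥M ℝ) ℝ w = w.1 := fun w => rfl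
            simp only [Polynomial.eval₂_add, Polynomial.eval₂_mul, Polynomial.eval₂_pow,
              Polynomial.eval₂_X, Polynomial.eval₂_C, hmap]
            ring
          rw [hev, hrel]
      exact halg_mem z (isIntegral_trans (R := ↥M) z h2).isAlgebraic
    have hTmem : ∀ i : Fin (m + 2), T i ∈ integralClosure ↥M ℝ := fun i =>
      hMsub _ (IntermediateField.subset_adjoin ℚ _ ⟨i, rfl⟩)
    have ha1mem : a 1 ∈ integralClosure ↥M ℝ := by
      have := hTmem ⟨0, by omega⟩
      simpa [hT] using this
    have hcmem : ∀ j, 1 ≤ j → j ≤ m + 1 → c j ∈ integralClosure ↥M ℝ := by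
      intro j h1 h2
      have h3 := hTmem ⟨j, by omega⟩
      have h4 : T ⟨j, by omega⟩ = c j := by
        simp only [hT]
        rw [if_neg (by omega)]
      rwa [h4] at h3
    have hsmem : ∀ j, 1 ≤ j → j ≤ m + 1 → s j ∈ integralClosure ↥M ℝ := by
      intro j h1 h2
      apply hsq
      have hrelj : s j ^ 2 = 1 - c j ^ 2 := by
        linear_combination hedge j h1 (by omega)
      rw [hrelj]
      exact sub_mem (one_mem _) (pow_mem (hcmem j h1 h2) 2)
    have hC2mem : C2 ∈ integralClosure ↥M ℝ := by
      rw [hC2]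
      apply Subalgebra.sum_mem
      intro j hj
      have hj' := Finset.mem_Ico.mp hj
      exact hcmem j hj'.1 (by omega)
    have hS2mem : S2 ∈ integralClosure ↥M ℝ := by
      rw [hS2]
      apply Subalgebra.sum_mem
      intro j hj
      have hj' := Finset.mem_Ico.mp hj
      exact hsmem j hj'.1 (by omega)
    have hDne : C2 ^ 2 + S2 ^ 2 ≠ 0 := by
      intro h0
      apply hdeg
      constructor <;> nlinarith [sq_nonneg C2, sq_nonneg S2]
    have hedgem2 := hedge (m + 2) (by omega) (by omega)
    have hGrel : (4 * (C2 ^ 2 + S2 ^ 2)) * c (m + 2) ^ 2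
        + (4 * (C2 ^ 2 + S2 ^ 2) * C2) * c (m + 2)
        + ((C2 ^ 2 + S2 ^ 2) ^ 2 - 4 * S2 ^ 2) = 0 := by
      linear_combination ((C2 ^ 2 + S2 ^ 2) + 2 * C2 * c (m + 2) - 2 * S2 * s (m + 2)) * hstar
        + 4 * S2 ^ 2 * hedgem2
    have hquadD : ∀ z D p q : ℝ, D ∈ integralClosure ↥M ℝ → p ∈ integralClosure ↥M ℝ →
        q ∈ integralClosure ↥M ℝ → D ≠ 0 → D * z ^ 2 + p * z + q = 0 →
        z ∈ integralClosure ↥M ℝ := by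
      intro z D p q hD hp hq hDne0 hrel
      apply hquad z (p * D⁻¹) (q * D⁻¹) (mul_mem hp (hinv _ hD)) (mul_mem hq (hinv _ hD))
      field_simp
      linear_combination hrel
    have hcm2mem : c (m + 2) ∈ integralClosure ↥M ℝ := by
      refine hquadD (c (m + 2)) (4 * (C2 ^ 2 + S2 ^ 2)) (4 * (C2 ^ 2 + S2 ^ 2) * C2)
        ((C2 ^ 2 + S2 ^ 2) ^ 2 - 4 * S2 ^ 2) ?_ ?_ ?_ (by
          intro h0
          apply hDne
          linarith) hGrel
      · have h4 : ((4 : ℕ) : ℝ) ∈ integralClosure ↥M ℝ := Subalgebra.natCast_mem _ 4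
        have h4' : (4 : ℝ) ∈ integralClosure ↥M ℝ := by exact_mod_cast h4
        exact mul_mem h4' (add_mem (pow_mem hC2mem 2) (pow_mem hS2mem 2))
      · have h4 : ((4 : ℕ) : ℝ) ∈ integralClosure ↥M ℝ := Subalgebra.natCast_mem _ 4
        have h4' : (4 : ℝ) ∈ integralClosure ↥M ℝ := by exact_mod_cast h4
        exact mul_mem (mul_mem h4' (add_mem (pow_mem hC2mem 2) (pow_mem hS2mem 2))) hC2mem
      · have h4 : ((4 : ℕ) : ℝ) ∈ integralClosure ↥M ℝ := Subalgebra.natCast_mem _ 4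
        have h4' : (4 : ℝ) ∈ integralClosure ↥M ℝ := by exact_mod_cast h4
        exact sub_mem (pow_mem (add_mem (pow_mem hC2mem 2) (pow_mem hS2mem 2)) 2)
          (mul_mem h4' (pow_mem hS2mem 2))
    have hsm2mem : s (m + 2) ∈ integralClosure ↥M ℝ := by
      apply hsq
      have hrelj : s (m + 2) ^ 2 = 1 - c (m + 2) ^ 2 := by
        linear_combination hedgem2
      rw [hrelj]
      exact sub_mem (one_mem _) (pow_mem hcm2mem 2)
    have hcallmem : ∀ j, 1 ≤ j → j ≤ m + 2 → c j ∈ integralClosure ↥M ℝ := by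
      intro j h1 h2
      by_cases hjm : j ≤ m + 1
      · exact hcmem j h1 hjm
      · have : j = m + 2 := by omega
        rw [this]; exact hcm2mem
    have hsallmem : ∀ j, 1 ≤ j → j ≤ m + 2 → s j ∈ integralClosure ↥M ℝ := by
      intro j h1 h2
      by_cases hjm : j ≤ m + 1
      · exact hsmem j h1 hjm
      · have : j = m + 2 := by omega
        rw [this]; exact hsm2mem
    have hamem : ∀ i, 1 ≤ i → i ≤ m + 3 → a i ∈ integralClosure ↥M ℝ := by
      intro i h1 h2
      rw [htel_a i h1]
      apply add_mem ha1mem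
      apply Subalgebra.sum_mem
      intro j hj
      have hj' := Finset.mem_Ico.mp hj
      exact hcallmem j hj'.1 (by omega)
    have hbmem : ∀ i, 1 ≤ i → i ≤ m + 3 → b i ∈ integralClosure ↥M ℝ := by
      intro i h1 h2
      rw [htel_b i h1, hb1, zero_add]
      apply Subalgebra.sum_mem
      intro j hj
      have hj' := Finset.mem_Ico.mp hj
      exact hsallmem j hj'.1 (by omega)
    have hrmem : ∀ i, 1 ≤ i → i ≤ m + 3 → IsAlgebraic ↥M (r i) := by
      intro i h1 h2
      have hri := hrne i h1 h2
      have hF0i : r i * (4 * (a i ^ 2 + b i ^ 2) - 1) = 2 := by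
        simp only [haf, hbf]
        field_simp
        linear_combination 4 * hnorm i h1 h2
      have hDi : (4 * (a i ^ 2 + b i ^ 2) - 1) ≠ 0 := by
        intro h0
        rw [h0, mul_zero] at hF0i
        norm_num at hF0i
      have hDiMem : (4 * (a i ^ 2 + b i ^ 2) - 1) ∈ integralClosure ↥M ℝ := by
        have h4 : ((4 : ℕ) : ℝ) ∈ integralClosure ↥M ℝ := Subalgebra.natCast_mem _ 4
        have h4' : (4 : ℝ) ∈ integralClosure ↥M ℝ := by exact_mod_cast h4
        exact sub_mem (mul_mem h4' (add_mem (pow_mem (hamem i h1 h2) 2)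
          (pow_mem (hbmem i h1 h2) 2))) (one_mem _)
      have hrieq : r i = 2 * (4 * (a i ^ 2 + b i ^ 2) - 1)⁻¹ := by
        field_simp
        linear_combination hF0i
      rw [hrieq]
      apply hmem_alg
      have h2m : ((2 : ℕ) : ℝ) ∈ integralClosure ↥M ℝ := Subalgebra.natCast_mem _ 2
      have h2m' : (2 : ℝ) ∈ integralClosure ↥M ℝ := by exact_mod_cast h2m
      exact mul_mem h2m' (hinv _ hDiMem)
    -- apply the counting lemma
    have hfun : Sum.elim (Fin.elim0 : Fin 0 → ℝ) (fun i : Fin (m + 2 + 1) => r (i.1 + 1))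
        = (fun i : Fin (m + 3) => r (i.1 + 1)) ∘ (Sum.elim Fin.elim0 id) := by
      funext o
      rcases o with i | i
      · exact i.elim0
      · rfl
    have ginj : Function.Injective
        (Sum.elim (Fin.elim0 : Fin 0 → Fin (m + 3)) (id : Fin (m + 3) → Fin (m + 3))) := by
      rintro (i | i) (i2 | i2) h
      · exact i.elim0
      · exact i.elim0
      · exact i2.elim0
      · simp only [Sum.elim_inr, id_eq] at h
        rw [h]
    apply count_lemma (m + 2) 0 Fin.elim0 T (fun i : Fin (m + 2 + 1) => r (i.1 + 1))
    · rw [hfun]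
      exact hind.comp _ ginj
    · intro i
      rw [Set.range_eq_empty (Fin.elim0 : Fin 0 → ℝ), Set.empty_union]
      exact hrmem (i.1 + 1) (by omega) (by omega)

end
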